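/- Let X = ℝ/ℤ × ℝ/ℤ be the torus and f(x,y) = (x+α, y) for a fixed irrational α. Then for every δ > 0 there is a two-sided δ-pseudo-orbit ⟨x_i⟩_{i∈ℤ} whose α-limit set is ℝ/ℤ × {0} and whose ω-limit set is ℝ/ℤ × {1/2}; consequently (X,f) does not have two-sided cofinal orbital shadowing. -/

import Mathlib

open Filter Metric Topology Set

def omegaSeq {X : Type*} [MetricSpace X] (u : ℕ → X) : Set X :=
  ⋂ M : ℕ, closure (u '' Set.Ioi M)

def omegaPt {X : Type*} [MetricSpace X] (f : X → X) (x : X) : Set X :=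
  omegaSeq (fun n => f^[n] x)

def omegaZ {X : Type*} [MetricSpace X] (u : ℤ → X) : Set X :=
  ⋂ M : ℕ, closure (u '' {n : ℤ | (M : ℤ) < n})

def alphaZ {X : Type*} [MetricSpace X] (u : ℤ → X) : Set X :=
  ⋂ M : ℕ, closure (u '' {n : ℤ | n < -(M : ℤ)})

/-- `A` is internally chain transitive for `f`. -/
def chainTransitive {X : Type*} [MetricSpace X] (f : X → X) (A : Set X) : Prop :=
  ∀ a ∈ A, ∀ b ∈ A, ∀ δ > (0:ℝ), ∃ N : ℕ, 1 ≤ N ∧ ∃ y : ℕ → X,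
    y 0 = a ∧ y N = b ∧ (∀ i ≤ N, y i ∈ A) ∧ ∀ i < N, dist (f (y i)) (y (i+1)) < δ

/-- `u` is a full trajectory of `f`. -/
def fullTraj {X : Type*} (f : X → X) (u : ℤ → X) : Prop := ∀ i : ℤ, f (u i) = u (i + 1)

/-- `u` is a two-sided asymptotic pseudo-orbit of `f`. -/
def twoSidedAsymptotic {X : Type*} [MetricSpace X] (f : X → X) (u : ℤ → X) : Prop :=
  Filter.Tendsto (fun i : ℤ => dist (f (u i)) (u (i + 1))) Filter.atTop (nhds 0) ∧
  Filter.Tendsto (fun i : ℤ => dist (f (u i)) (u (i + 1))) Filter.atBot (nhds 0)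

/-- The γ-limit set of a point. -/
def gammaLimit {X : Type*} [MetricSpace X] (f : X → X) (x : X) : Set X :=
  {y | y ∈ omegaPt f x ∧ ∃ (ys : ℕ → X) (ns : ℕ → ℕ), StrictMono ns ∧
    (∀ i, f^[ns i] (ys i) = x) ∧ Filter.Tendsto ys Filter.atTop (nhds y)}

/-- Two-sided cofinal orbital shadowing. -/
def twoSidedCofinalOrbitalShadowing {X : Type*} [MetricSpace X] (f : X → X) : Prop :=
  ∀ ε > (0:ℝ), ∃ δ > (0:ℝ), ∀ x : ℤ → X, (∀ i, dist (f (x i)) (x (i + 1)) < δ) →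
    ∃ z : ℤ → X, fullTraj f z ∧ ∀ K : ℕ, ∃ N : ℕ, K ≤ N ∧
      hausdorffDist (closure (z '' {n : ℤ | (N : ℤ) ≤ n}))
        (closure (x '' {n : ℤ | (N : ℤ) ≤ n})) < ε ∧
      hausdorffDist (closure (z '' {n : ℤ | n ≤ -(N : ℤ)}))
        (closure (x '' {n : ℤ | n ≤ -(N : ℤ)})) < ε

/-- Rotation in the first coordinate of the torus. -/
noncomputable def torusRot (α : ℝ) :
    AddCircle (1:ℝ) × AddCircle (1:ℝ) → AddCircle (1:ℝ) × AddCircle (1:ℝ) :=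
  fun p => (p.1 + (α : AddCircle (1:ℝ)), p.2)

/- ### Auxiliary lemmas -/

private lemma coe_int_zero' (m : ℤ) : (((m:ℝ)) : AddCircle (1:ℝ)) = 0 :=
  (QuotientAddGroup.eq_zero_iff _).2 ⟨m, by simp⟩

private lemma norm_coe_le' (x : ℝ) : ‖(x : AddCircle (1:ℝ))‖ ≤ |x| := by
  simpa using (QuotientAddGroup.norm_mk_le_norm (S := AddSubgroup.zmultiples (1:ℝ)) (m := x))

private lemma denseS {α : ℝ} (hα : Irrational α) :
    Dense ((AddSubgroup.closure ({1, α} : Set ℝ) : AddSubgroup ℝ) : Set ℝ) := by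
  rcases (AddSubgroup.closure ({1, α} : Set ℝ)).dense_or_cyclic with h | ⟨a, ha⟩
  · exact h
  · exfalso
    have h1 : (1:ℝ) ∈ AddSubgroup.closure ({1, α} : Set ℝ) :=
      AddSubgroup.subset_closure (by simp)
    have h2 : α ∈ AddSubgroup.closure ({1, α} : Set ℝ) :=
      AddSubgroup.subset_closure (by simp)
    rw [ha, AddSubgroup.mem_closure_singleton] at h1 h2
    obtain ⟨n, hn⟩ := h1; obtain ⟨m, hm⟩ := h2
    rw [zsmul_eq_mul] at hn hm
    have hn0 : (n:ℝ) ≠ 0 := fun h => by simp [h] at hn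
    apply hα ⟨(m : ℚ) / (n : ℚ), ?_⟩
    push_cast
    rw [div_eq_iff hn0]
    linear_combination (n:ℝ) * hm - (m:ℝ) * hn

private lemma exists_small {α : ℝ} (hα : Irrational α) {ε : ℝ} (hε : 0 < ε) :
    ∃ n m : ℤ, 0 < n ∧ 0 < |(n:ℝ) * α + m| ∧ |(n:ℝ) * α + m| < ε := by
  set ε' := min ε 1 with hε'def
  have hε'0 : 0 < ε' := lt_min hε one_pos
  have hε'ε : ε' ≤ ε := min_le_left _ _
  have hε'1 : ε' ≤ 1 := min_le_right _ _
  obtain ⟨s, hs, hsS⟩ := Metric.dense_iff.1 (denseS hα) (3*ε'/4) (ε'/4) (by linarith)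
  have habs : |s - 3*ε'/4| < ε'/4 := by
    simpa [Real.dist_eq, abs_sub_comm] using hs
  obtain ⟨m, n, hmn⟩ := AddSubgroup.mem_closure_pair.1 hsS
  rw [zsmul_eq_mul, zsmul_eq_mul, mul_one] at hmn
  have hs1 : ε'/2 < s := by have := abs_lt.1 habs; linarith [this.1]
  have hs2 : s < ε' := by have := abs_lt.1 habs; linarith [this.2]
  have hspos : 0 < s := by linarith
  have hn0 : n ≠ 0 := by
    rintro rfl
    have hsm : s = (m:ℝ) := by push_cast at hmn; linarith
    have hm0 : 0 < m := by exact_mod_cast hsm ▸ hspos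
    have : (1:ℝ) ≤ (m:ℝ) := by exact_mod_cast hm0
    linarith
  rcases hn0.lt_or_gt with hneg | hpos
  · refine ⟨-n, -m, by omega, ?_, ?_⟩ <;>
    · have : ((-n:ℤ):ℝ) * α + ((-m:ℤ):ℝ) = -s := by push_cast; push_cast at hmn; linarith
      rw [this, abs_neg, abs_of_pos hspos]
      first | exact hspos | linarith
  · refine ⟨n, m, hpos, ?_, ?_⟩ <;>
    · have : ((n:ℤ):ℝ) * α + ((m:ℤ):ℝ) = s := by push_cast at hmn ⊢; linarith
      rw [this, abs_of_pos hspos]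
      first | exact hspos | linarith

private lemma forward_approx {α : ℝ} (hα : Irrational α) (t : ℝ) {ε : ℝ} (hε : 0 < ε)
    (M : ℤ) : ∃ n c : ℤ, M < n ∧ |(n:ℝ) * α + c - t| < ε := by
  obtain ⟨k, m, hk, hb0, hbε⟩ := exists_small hα hε
  set b : ℝ := (k:ℝ) * α + m with hbdef
  set J : ℤ := max (M + 1) 1 with hJdef
  have hJ1 : 1 ≤ J := le_max_right _ _
  have hJM : M < J := lt_of_lt_of_le (by omega) (le_max_left _ _)
  have hbne : b ≠ 0 := by intro h; rw [h] at hb0; simp at hb0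
  rcases hbne.lt_or_gt with hbneg | hbpos
  · set c₀ : ℤ := ⌊(J:ℝ) * b - t⌋ with hc₀
    set j : ℤ := ⌈(t + c₀) / b⌉ with hjdef
    have h1 : t + (c₀:ℝ) ≤ (J:ℝ) * b := by
      have := Int.floor_le ((J:ℝ) * b - t); linarith
    have hJj : (J:ℝ) ≤ (t + c₀) / b := (le_div_iff_of_neg hbneg).2 (by linarith)
    have hj1 : (t + (c₀:ℝ)) / b ≤ (j:ℝ) := Int.le_ceil _
    have hj2 : (j:ℝ) < (t + c₀) / b + 1 := by exact_mod_cast Int.ceil_lt_add_one _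
    have hJle : J ≤ j := by exact_mod_cast hJj.trans hj1
    have hjb1 : (j:ℝ) * b ≤ t + c₀ := by
      have := (div_le_iff_of_neg hbneg).1 hj1; linarith
    have hjb2 : t + (c₀:ℝ) + b < (j:ℝ) * b := by
      have h' : (j:ℝ) - 1 < (t + c₀) / b := by linarith
      have := (lt_div_iff_of_neg hbneg).1 h'
      nlinarith
    refine ⟨j * k, j * m - c₀, ?_, ?_⟩
    · have : j ≤ j * k := le_mul_of_one_le_right (by omega) hk
      omega
    · have key : ((j * k : ℤ):ℝ) * α + ((j * m - c₀ : ℤ):ℝ) - t = (j:ℝ) * b - (t + c₀) := by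
        rw [hbdef]; push_cast; ring
      rw [key]
      have hbl : -ε < b := (abs_lt.1 hbε).1
      rw [abs_lt]; constructor <;> linarith
  · set c₀ : ℤ := ⌈(J:ℝ) * b - t⌉ with hc₀
    set j : ℤ := ⌈(t + c₀) / b⌉ with hjdef
    have h1 : (J:ℝ) * b ≤ t + c₀ := by
      have := Int.le_ceil ((J:ℝ) * b - t); linarith
    have hJj : (J:ℝ) ≤ (t + c₀) / b := (le_div_iff₀ hbpos).2 (by linarith)
    have hj1 : (t + (c₀:ℝ)) / b ≤ (j:ℝ) := Int.le_ceil _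
    have hj2 : (j:ℝ) < (t + c₀) / b + 1 := by exact_mod_cast Int.ceil_lt_add_one _
    have hJle : J ≤ j := by exact_mod_cast hJj.trans hj1
    have hjb1 : t + (c₀:ℝ) ≤ (j:ℝ) * b := by
      have := (div_le_iff₀ hbpos).1 hj1; linarith
    have hjb2 : (j:ℝ) * b < t + c₀ + b := by
      have h' : (j:ℝ) - 1 < (t + c₀) / b := by linarith
      have := (lt_div_iff₀ hbpos).1 h'
      nlinarith
    refine ⟨j * k, j * m - c₀, ?_, ?_⟩
    · have : j ≤ j * k := le_mul_of_one_le_right (by omega) hk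
      omega
    · have key : ((j * k : ℤ):ℝ) * α + ((j * m - c₀ : ℤ):ℝ) - t = (j:ℝ) * b - (t + c₀) := by
        rw [hbdef]; push_cast; ring
      rw [key]
      have hbl : b < ε := (abs_lt.1 hbε).2
      rw [abs_lt]; constructor <;> linarith

private lemma dense_fwd {α : ℝ} (hα : Irrational α) (a : AddCircle (1:ℝ)) (M : ℤ) :
    Dense ((fun n : ℤ => a + (((n:ℝ) * α : ℝ) : AddCircle (1:ℝ))) '' {n : ℤ | M < n}) := by
  rw [Metric.dense_iff]
  intro x ε hε
  obtain ⟨a₀, rfl⟩ : ∃ y : ℝ, (y : AddCircle (1:ℝ)) = a := Quot.exists_rep a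
  obtain ⟨x₀, rfl⟩ : ∃ y : ℝ, (y : AddCircle (1:ℝ)) = x := Quot.exists_rep x
  obtain ⟨n, c, hn, happ⟩ := forward_approx hα (x₀ - a₀) hε M
  refine ⟨(a₀ : AddCircle (1:ℝ)) + (((n:ℝ) * α : ℝ) : AddCircle (1:ℝ)), ?_, ⟨n, hn, rfl⟩⟩
  rw [Metric.mem_ball, dist_eq_norm]
  have hcalc : ((a₀ : AddCircle (1:ℝ)) + (((n:ℝ) * α : ℝ) : AddCircle (1:ℝ))) - (x₀ : AddCircle (1:ℝ))
      = (((a₀ + (n:ℝ) * α - x₀ + c : ℝ)) : AddCircle (1:ℝ)) := by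
    rw [show (a₀ + (n:ℝ) * α - x₀ + (c:ℝ) : ℝ) = (a₀ + ((n:ℝ)*α) + (-x₀)) + ((c:ℤ):ℝ) from by
      push_cast; ring]
    rw [AddCircle.coe_add, AddCircle.coe_add, AddCircle.coe_add, coe_int_zero' c, add_zero]
    rw [show ((-x₀ : ℝ) : AddCircle (1:ℝ)) = -(x₀ : AddCircle (1:ℝ)) from by
      rw [eq_neg_iff_add_eq_zero, ← AddCircle.coe_add]; norm_num]
    rw [sub_eq_add_neg]
  rw [hcalc]
  calc ‖(((a₀ + (n:ℝ) * α - x₀ + c : ℝ)) : AddCircle (1:ℝ))‖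
      ≤ |a₀ + (n:ℝ) * α - x₀ + c| := norm_coe_le' _
    _ < ε := by rw [show a₀ + (n:ℝ) * α - x₀ + c = (n:ℝ) * α + c - (x₀ - a₀) by ring]; exact happ

private lemma dense_bwd {α : ℝ} (hα : Irrational α) (a : AddCircle (1:ℝ)) (M : ℤ) :
    Dense ((fun n : ℤ => a + (((n:ℝ) * α : ℝ) : AddCircle (1:ℝ))) '' {n : ℤ | n < M}) := by
  have heq : ((fun n : ℤ => a + (((n:ℝ) * α : ℝ) : AddCircle (1:ℝ))) '' {n : ℤ | n < M})
      = ((fun n : ℤ => a + (((n:ℝ) * (-α) : ℝ) : AddCircle (1:ℝ))) '' {n : ℤ | -M < n}) := by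
    ext p
    constructor
    · rintro ⟨n, hn, rfl⟩
      refine ⟨-n, by simp only [Set.mem_setOf_eq] at hn ⊢; omega, ?_⟩
      push_cast
      ring_nf
    · rintro ⟨n, hn, rfl⟩
      refine ⟨-n, by simp only [Set.mem_setOf_eq] at hn ⊢; omega, ?_⟩
      push_cast
      ring_nf
  rw [heq]
  exact dense_fwd hα.neg a (-M)

private lemma closure_prod_image {g : ℤ → AddCircle (1:ℝ)} {S : Set ℤ}
    (hd : Dense (g '' S)) (c : AddCircle (1:ℝ)) :
    closure ((fun n => (g n, c)) '' S) = (Set.univ : Set (AddCircle (1:ℝ))) ×ˢ {c} := by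
  have himg : (fun n => (g n, c)) '' S = (g '' S) ×ˢ {c} := by
    ext ⟨u, v⟩
    constructor
    · rintro ⟨n, hn, h⟩
      obtain ⟨h1, h2⟩ := Prod.mk.injEq .. ▸ h
      exact ⟨⟨n, hn, h1⟩, by simp [← h2]⟩
    · rintro ⟨⟨n, hn, h1⟩, h2⟩
      exact ⟨n, hn, by simp_all [Prod.ext_iff]⟩
  rw [himg, closure_prod_eq, hd.closure_eq, closure_singleton]

private lemma construction {α : ℝ} (hα : Irrational α) {δ : ℝ} (hδ : 0 < δ) :
    ∃ x : ℤ → AddCircle (1:ℝ) × AddCircle (1:ℝ), ∃ N0 : ℕ,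
      (∀ i, dist (torusRot α (x i)) (x (i + 1)) < δ) ∧
      (∀ K : ℤ, (N0:ℤ) ≤ K →
        closure (x '' {n : ℤ | K ≤ n}) = Set.univ ×ˢ {((1/2 : ℝ) : AddCircle (1:ℝ))}) ∧
      (∀ K : ℤ, K ≤ -1 →
        closure (x '' {n : ℤ | n ≤ K}) = Set.univ ×ˢ {((0 : ℝ) : AddCircle (1:ℝ))}) := by
  set φ : ℤ → ℝ := fun i => min (max ((i:ℝ) * (δ/2)) 0) (1/2) with hφ
  set x : ℤ → AddCircle (1:ℝ) × AddCircle (1:ℝ) :=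
    fun i => ((((i:ℝ) * α : ℝ) : AddCircle (1:ℝ)), ((φ i : ℝ) : AddCircle (1:ℝ))) with hx
  refine ⟨x, ⌈1/δ⌉₊, ?_, ?_, ?_⟩
  · intro i
    have hfst : (((((i:ℝ) * α : ℝ)) : AddCircle (1:ℝ)) + (α : AddCircle (1:ℝ)))
        = (((((i+1:ℤ):ℝ) * α : ℝ)) : AddCircle (1:ℝ)) := by
      rw [← AddCircle.coe_add]
      congr 1
      push_cast
      ring
    have hsnd : dist ((φ i : ℝ) : AddCircle (1:ℝ)) ((φ (i+1) : ℝ) : AddCircle (1:ℝ)) ≤ δ/2 := by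
      rw [dist_eq_norm, ← AddCircle.coe_sub]
      refine (norm_coe_le' _).trans ?_
      rw [hφ]
      refine (abs_min_sub_min_le_max _ _ _ _).trans ?_
      simp only [sub_self, abs_zero]
      refine max_le ((abs_max_sub_max_le_abs _ _ _).trans ?_) (by positivity)
      rw [show (i:ℝ) * (δ/2) - ((i+1:ℤ):ℝ) * (δ/2) = -(δ/2) by push_cast; ring]
      rw [abs_neg, abs_of_pos (by positivity)]
    show dist (torusRot α (x i)) (x (i+1)) < δ
    rw [hx, torusRot, Prod.dist_eq]
    simp only [hfst]
    rw [dist_self]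
    have : max 0 (dist ((φ i : ℝ) : AddCircle (1:ℝ)) ((φ (i+1) : ℝ) : AddCircle (1:ℝ))) ≤ δ/2 :=
      max_le (by positivity) hsnd
    calc _ ≤ δ/2 := this
      _ < δ := by linarith
  · intro K hK
    have hphi : ∀ n : ℤ, K ≤ n → φ n = 1/2 := by
      intro n hn
      have h1 : (1:ℝ)/δ ≤ (n:ℝ) := by
        calc (1:ℝ)/δ ≤ (⌈1/δ⌉₊ : ℝ) := Nat.le_ceil _
          _ ≤ (n:ℝ) := by exact_mod_cast le_trans hK hn
      have h2 : (1:ℝ)/2 ≤ (n:ℝ) * (δ/2) := by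
        rw [div_le_iff₀ hδ] at h1
        nlinarith
      rw [hφ]
      simp only
      rw [max_eq_left (by linarith), min_eq_right h2]
    have hcong : EqOn x
        (fun n : ℤ => ((0 : AddCircle (1:ℝ)) + (((n:ℝ) * α : ℝ) : AddCircle (1:ℝ)),
          ((1/2 : ℝ) : AddCircle (1:ℝ)))) {n : ℤ | K ≤ n} := by
      intro n hn
      rw [hx]
      simp only
      rw [hphi n hn, zero_add]
    rw [Set.image_congr hcong]
    rw [show {n : ℤ | K ≤ n} = {n : ℤ | K - 1 < n} from by ext n; simp]
    exact closure_prod_image (dense_fwd hα 0 (K-1)) _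
  · intro K hK
    have hphi : ∀ n : ℤ, n ≤ K → φ n = 0 := by
      intro n hn
      have h1 : (n:ℝ) ≤ -1 := by exact_mod_cast le_trans hn hK
      have h2 : (n:ℝ) * (δ/2) ≤ 0 := mul_nonpos_of_nonpos_of_nonneg (by linarith) (by positivity)
      rw [hφ]
      simp only
      rw [max_eq_right h2, min_eq_left (by norm_num)]
    have hcong : EqOn x
        (fun n : ℤ => ((0 : AddCircle (1:ℝ)) + (((n:ℝ) * α : ℝ) : AddCircle (1:ℝ)),
          ((0 : ℝ) : AddCircle (1:ℝ)))) {n : ℤ | n ≤ K} := by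
      intro n hn
      rw [hx]
      simp only
      rw [hphi n hn, zero_add]
    rw [Set.image_congr hcong]
    rw [show {n : ℤ | n ≤ K} = {n : ℤ | n < K + 1} from by ext n; simp]
    exact closure_prod_image (dense_bwd hα 0 (K+1)) _

theorem stmt15 (α : ℝ) (hα : Irrational α) :
    (∀ δ > (0:ℝ), ∃ x : ℤ → AddCircle (1:ℝ) × AddCircle (1:ℝ),
      (∀ i, dist (torusRot α (x i)) (x (i + 1)) < δ) ∧
      alphaZ x = Set.univ ×ˢ {((0:ℝ) : AddCircle (1:ℝ))} ∧
      omegaZ x = Set.univ ×ˢ {((1/2 : ℝ) : AddCircle (1:ℝ))}) ∧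
    ¬ twoSidedCofinalOrbitalShadowing (torusRot α) := by
  constructor
  · intro δ hδ
    obtain ⟨x, N0, hpseudo, hhi, hlo⟩ := construction hα hδ
    refine ⟨x, hpseudo, ?_, ?_⟩
    · unfold alphaZ
      have h : ∀ M : ℕ, closure (x '' {n : ℤ | n < -(M:ℤ)})
          = Set.univ ×ˢ {((0:ℝ) : AddCircle (1:ℝ))} := by
        intro M
        rw [show {n : ℤ | n < -(M:ℤ)} = {n : ℤ | n ≤ -(M:ℤ) - 1} from by ext n; simp]
        exact hlo _ (by omega)
      rw [iInter_congr h, iInter_const]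
    · unfold omegaZ
      apply subset_antisymm
      · refine (Set.iInter_subset _ N0).trans ?_
        rw [show {n : ℤ | (N0:ℤ) < n} = {n : ℤ | (N0:ℤ) + 1 ≤ n} from by ext n; simp,
          hhi _ (by omega)]
      · apply Set.subset_iInter
        intro M
        rw [← hhi (max ((M:ℤ)+1) (N0:ℤ)) (le_max_right _ _)]
        refine closure_mono (Set.image_mono ?_)
        intro n hn
        simp only [Set.mem_setOf_eq, le_max_iff] at hn ⊢
        omega
  · intro hsh
    obtain ⟨δ, hδ, hsh'⟩ := hsh (1/8) (by norm_num)
    obtain ⟨x, N0, hpseudo, hhi, hlo⟩ := construction hα hδ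
    obtain ⟨z, hz, hK⟩ := hsh' x hpseudo
    set a := (z 0).1 with hadef
    set c := (z 0).2 with hcdef
    have hstep : ∀ i : ℤ, z (i+1) = ((z i).1 + (α : AddCircle (1:ℝ)), (z i).2) := by
      intro i
      rw [← hz i]
      rfl
    have hzn : ∀ n : ℤ, z n = (a + (((n:ℝ) * α : ℝ) : AddCircle (1:ℝ)), c) := by
      intro n
      induction n using Int.induction_on with
      | zero =>
        have : (((0:ℤ):ℝ) * α : ℝ) = 0 := by push_cast; ring
        rw [this]
        norm_num
        rfl
      | succ i ih =>
        rw [hstep i, ih]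
        simp only
        rw [Prod.mk.injEq]
        refine ⟨?_, rfl⟩
        rw [add_assoc, ← AddCircle.coe_add]
        congr 2
        push_cast
        ring
      | pred i ih =>
        have h1 := hstep (-(i:ℤ) - 1)
        rw [show (-(i:ℤ) - 1) + 1 = -(i:ℤ) by ring, ih] at h1
        have h2 := (Prod.ext_iff.1 h1.symm).2
        have h3 := (Prod.ext_iff.1 h1.symm).1
        simp only at h2 h3
        have h4 : (z (-(i:ℤ) - 1)).1
            = a + ((((-(i:ℤ) - 1 : ℤ) : ℝ) * α : ℝ) : AddCircle (1:ℝ)) := by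
          have := eq_sub_of_add_eq h3
          rw [this, add_sub_assoc]
          congr 1
          rw [sub_eq_iff_eq_add, ← AddCircle.coe_add]
          congr 1
          push_cast
          ring
        rw [← h4, ← h2]
    obtain ⟨N, hNK, h1, h2⟩ := hK (N0 + 1)
    have hN0 : (N0:ℤ) ≤ (N:ℤ) := by exact_mod_cast le_trans (by omega) hNK
    have hN1 : (1:ℤ) ≤ (N:ℤ) := by exact_mod_cast le_trans (by omega : 1 ≤ N0 + 1) hNK
    have hXhi := hhi (N:ℤ) hN0
    have hXlo := hlo (-(N:ℤ)) (by omega)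
    have hZhi : closure (z '' {n : ℤ | (N:ℤ) ≤ n})
        = Set.univ ×ˢ ({c} : Set (AddCircle (1:ℝ))) := by
      have hcong : EqOn z
          (fun n : ℤ => (a + (((n:ℝ) * α : ℝ) : AddCircle (1:ℝ)), c)) {n : ℤ | (N:ℤ) ≤ n} :=
        fun n _ => hzn n
      rw [Set.image_congr hcong,
        show {n : ℤ | (N:ℤ) ≤ n} = {n : ℤ | (N:ℤ) - 1 < n} from by ext n; simp]
      exact closure_prod_image (dense_fwd hα a ((N:ℤ)-1)) _
    have hZlo : closure (z '' {n : ℤ | n ≤ -(N:ℤ)})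
        = Set.univ ×ˢ ({c} : Set (AddCircle (1:ℝ))) := by
      have hcong : EqOn z
          (fun n : ℤ => (a + (((n:ℝ) * α : ℝ) : AddCircle (1:ℝ)), c)) {n : ℤ | n ≤ -(N:ℤ)} :=
        fun n _ => hzn n
      rw [Set.image_congr hcong,
        show {n : ℤ | n ≤ -(N:ℤ)} = {n : ℤ | n < -(N:ℤ) + 1} from by ext n; simp]
      exact closure_prod_image (dense_bwd hα a (-(N:ℤ)+1)) _
    rw [hZhi, hXhi] at h1
    rw [hZlo, hXlo] at h2
    haveI : Fact ((0:ℝ) < 1) := ⟨one_pos⟩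
    have hbdd : ∀ s : Set (AddCircle (1:ℝ) × AddCircle (1:ℝ)), Bornology.IsBounded s :=
      fun s => Metric.isBounded_of_compactSpace
    have hfin1 : EMetric.hausdorffEdist
        (Set.univ ×ˢ ({c} : Set (AddCircle (1:ℝ))))
        (Set.univ ×ˢ ({((1/2:ℝ) : AddCircle (1:ℝ))} : Set (AddCircle (1:ℝ)))) ≠ ⊤ :=
      Metric.hausdorffEdist_ne_top_of_nonempty_of_bounded
        ⟨(0, c), by simp⟩ ⟨(0, ((1/2:ℝ) : AddCircle (1:ℝ))), by simp⟩ (hbdd _) (hbdd _)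
    have hfin2 : EMetric.hausdorffEdist
        (Set.univ ×ˢ ({c} : Set (AddCircle (1:ℝ))))
        (Set.univ ×ˢ ({((0:ℝ) : AddCircle (1:ℝ))} : Set (AddCircle (1:ℝ)))) ≠ ⊤ :=
      Metric.hausdorffEdist_ne_top_of_nonempty_of_bounded
        ⟨(0, c), by simp⟩ ⟨(0, ((0:ℝ) : AddCircle (1:ℝ))), by simp⟩ (hbdd _) (hbdd _)
    obtain ⟨y1, hy1, hdy1⟩ := Metric.exists_dist_lt_of_hausdorffDist_lt
      (show ((0 : AddCircle (1:ℝ)), c) ∈ Set.univ ×ˢ ({c} : Set (AddCircle (1:ℝ))) by simp)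
      h1 hfin1
    obtain ⟨y2, hy2, hdy2⟩ := Metric.exists_dist_lt_of_hausdorffDist_lt
      (show ((0 : AddCircle (1:ℝ)), c) ∈ Set.univ ×ˢ ({c} : Set (AddCircle (1:ℝ))) by simp)
      h2 hfin2
    have hy1' : y1.2 = ((1/2:ℝ) : AddCircle (1:ℝ)) := hy1.2
    have hy2' : y2.2 = ((0:ℝ) : AddCircle (1:ℝ)) := hy2.2
    have hd1 : dist c ((1/2:ℝ) : AddCircle (1:ℝ)) < 1/8 := by
      calc dist c ((1/2:ℝ) : AddCircle (1:ℝ)) = dist ((0 : AddCircle (1:ℝ)), c).2 y1.2 := by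
            rw [hy1']
        _ ≤ dist ((0 : AddCircle (1:ℝ)), c) y1 := by rw [Prod.dist_eq]; exact le_max_right _ _
        _ < 1/8 := hdy1
    have hd2 : dist c ((0:ℝ) : AddCircle (1:ℝ)) < 1/8 := by
      calc dist c ((0:ℝ) : AddCircle (1:ℝ)) = dist ((0 : AddCircle (1:ℝ)), c).2 y2.2 := by
            rw [hy2']
        _ ≤ dist ((0 : AddCircle (1:ℝ)), c) y2 := by rw [Prod.dist_eq]; exact le_max_right _ _
        _ < 1/8 := hdy2
    have htri : dist ((0:ℝ) : AddCircle (1:ℝ)) ((1/2:ℝ) : AddCircle (1:ℝ)) < 1/4 := by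
      calc dist ((0:ℝ) : AddCircle (1:ℝ)) ((1/2:ℝ) : AddCircle (1:ℝ))
          ≤ dist ((0:ℝ) : AddCircle (1:ℝ)) c + dist c ((1/2:ℝ) : AddCircle (1:ℝ)) :=
            dist_triangle _ _ _
        _ < 1/4 := by rw [dist_comm ((0:ℝ) : AddCircle (1:ℝ)) c]; linarith
    have hval : dist ((0:ℝ) : AddCircle (1:ℝ)) ((1/2:ℝ) : AddCircle (1:ℝ)) = 1/2 := by
      have h0 : ((0:ℝ) : AddCircle (1:ℝ)) = 0 := by norm_num
      rw [h0, dist_zero_left, AddCircle.norm_eq]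
      norm_num [round_eq]
    rw [hval] at htri
    norm_num at htri
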